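/- Let x_q satisfy the recursion x_q² = (1 + x_{q-1})(1 + x_{q+1}) for q ≥ 1 with x_0 = 0 and x_1 = sin(3θ)/sin(θ) where sin θ ≠ 0 and 1 + x_q ≠ 0 for all q. Then x_q = sin(qθ)·sin((q+2)θ)/sin²θ for all q ≥ 0. -/

import Mathlib

lemma sin_shift_key (θ s : ℂ) :
    Complex.sin (s - θ) * Complex.sin (s + θ) = Complex.sin s ^ 2 - Complex.sin θ ^ 2 := by
  rw [Complex.sin_add, Complex.sin_sub]
  linear_combination (Complex.sin s)^2 * (Complex.sin_sq_add_cos_sq θ)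
    - (Complex.sin θ)^2 * (Complex.sin_sq_add_cos_sq s)

theorem constant_TBA_uniqueness (θ : ℂ) (hθ : Complex.sin θ ≠ 0)
    (x : ℕ → ℂ)
    (hx0 : x 0 = 0)
    (hx1 : x 1 = Complex.sin (3 * θ) / Complex.sin θ)
    (hrec : ∀ q : ℕ, x (q + 1) ^ 2 = (1 + x q) * (1 + x (q + 2)))
    (hne : ∀ q : ℕ, 1 + x q ≠ 0) :
    ∀ q : ℕ, x q = Complex.sin (q * θ) * Complex.sin ((q + 2) * θ) /
      Complex.sin θ ^ 2 := by
  set f : ℕ → ℂ := fun q => Complex.sin (q * θ) * Complex.sin ((q + 2) * θ) /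
      Complex.sin θ ^ 2 with hf
  have hA : ∀ n : ℕ, 1 + f n = Complex.sin (((n : ℂ) + 1) * θ) ^ 2 / Complex.sin θ ^ 2 := by
    intro n
    have h := sin_shift_key θ (((n : ℂ) + 1) * θ)
    have e1 : ((n : ℂ) + 1) * θ - θ = (n : ℂ) * θ := by ring
    have e2 : ((n : ℂ) + 1) * θ + θ = ((n : ℂ) + 2) * θ := by ring
    rw [e1, e2] at h
    simp only [hf]
    field_simp
    rw [mul_comm θ ((n:ℂ)+2), mul_comm θ ((n:ℂ)+1)]
    linear_combination h
  have main : ∀ q : ℕ, x q = f q ∧ x (q + 1) = f (q + 1) := by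
    intro q
    induction q with
    | zero =>
      constructor
      · simp [hf, hx0]
      · simp only [hf, hx1]
        push_cast
        have e3 : ((1 : ℂ) + 2) * θ = 3 * θ := by ring
        rw [one_mul, e3]
        field_simp
    | succ n ih =>
      refine ⟨ih.2, ?_⟩
      have hr := hrec n
      rw [ih.1, ih.2] at hr
      have hfrec : f (n + 1) ^ 2 = (1 + f n) * (1 + f (n + 2)) := by
        rw [hA n, hA (n + 2)]
        simp only [hf]
        push_cast
        field_simp
        ring
      have hne' : 1 + f n ≠ 0 := by rw [← ih.1]; exact hne n
      exact add_left_cancel (mul_left_cancel₀ hne' (hr.symm.trans hfrec))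
  intro q
  exact (main q).1
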